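/- Gold-style behaviourally correct learning under any delayable restriction is closed under requiring totality of the learner: for every delayable restriction δ, [RTxtGδ] = [TxtGδ]; and for every semantic restriction δ' and every interaction operator β ∈ {G, Psd, Sd}, [RTxtβδ'] = [Txtβδ']. -/

import Mathlib

/-- The `e`-th computably enumerable set: the domain of the `e`-th partial
computable function in the standard numbering of `Nat.Partrec.Code`. -/
def Wset (e : ℕ) : Set ℕ := {x | ((Denumerable.ofNat Nat.Partrec.Code e).eval x).Dom}

/-- A text: a function from ℕ to ℕ ∪ {#}, with `none` playing the role of the pause symbol #. -/
def Text := ℕ → Option ℕ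

/-- The content of a text: its range without the pause symbol. -/
def content (T : Text) : Set ℕ := {x | ∃ n, T n = some x}

/-- The initial segment `T[n]` of a text, as a finite sequence over ℕ ∪ {#}. -/
def seg (T : Text) (n : ℕ) : List (Option ℕ) := (List.range n).map T

/-- The content of a finite sequence over ℕ ∪ {#}. -/
def contentSeg (l : List (Option ℕ)) : Set ℕ := {x | (some x) ∈ l}

/-- The content of `T[n]` as a finite set. -/
def fset (T : Text) (n : ℕ) : Finset ℕ := ((List.range n).map T).reduceOption.toFinset

/-- A restriction on (total) hypothesis sequences and texts. -/
abbrev Restriction := (ℕ → ℕ) → Text → Prop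

/-- δ is delayable. -/
def Delayable (δ : Restriction) : Prop :=
  ∀ T T' : Text, content T = content T' →
    ∀ p : ℕ → ℕ, ∀ r : ℕ → ℕ, Monotone r → (∀ m : ℕ, ∃ n : ℕ, m ≤ r n) →
      δ p T → (∀ n : ℕ, contentSeg (seg T (r n)) ⊆ contentSeg (seg T' n)) →
      δ (p ∘ r) T'

/-- δ is semantic. -/
def Semantic (δ : Restriction) : Prop :=
  ∀ p p' : ℕ → ℕ, ∀ T : Text, δ p T → (∀ n : ℕ, Wset (p n) = Wset (p' n)) → δ p' T

/-- A partial learner with inputs of type α learns `L` under δ via the given way of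
extracting the stage-`n` input from a text. -/
def LearnsVia {α : Type} (inp : Text → ℕ → α) (h : α →. ℕ) (δ : Restriction)
    (L : Set ℕ) : Prop :=
  ∀ T : Text, content T = L →
    ∃ p : ℕ → ℕ, (∀ n : ℕ, h (inp T n) = Part.some (p n)) ∧ δ p T

/-- Classes learnable by a partial computable learner. -/
def PClass {α : Type} [Primcodable α] (inp : Text → ℕ → α) (δ : Restriction) :
    Set (Set (Set ℕ)) :=
  {𝓛 | ∃ h : α →. ℕ, Partrec h ∧ ∀ L ∈ 𝓛, LearnsVia inp h δ L}

/-- Classes learnable by a total computable learner. -/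
def RClass {α : Type} [Primcodable α] (inp : Text → ℕ → α) (δ : Restriction) :
    Set (Set (Set ℕ)) :=
  {𝓛 | ∃ h : α → ℕ, Computable h ∧ ∀ L ∈ 𝓛, LearnsVia inp (fun a => Part.some (h a)) δ L}

/-- The three interaction operators, as input-extraction maps. -/
def inpG : Text → ℕ → List (Option ℕ) := fun T n => seg T n
def inpPsd : Text → ℕ → Finset ℕ × ℕ := fun T n => (fset T n, n)
def inpSd : Text → ℕ → Finset ℕ := fun T n => fset T n

-- ===== auxiliary =====
open Nat.Partrec (Code)
open Nat.Partrec.Code Encodable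

lemma RClass_subset_PClass {α : Type} [Primcodable α] (inp : Text → ℕ → α) (δ : Restriction) :
    RClass inp δ ⊆ PClass inp δ := by
  rintro 𝓛 ⟨h, hc, hl⟩
  exact ⟨fun a => Part.some (h a), hc, hl⟩

lemma seg_length (T : Text) (n : ℕ) : (seg T n).length = n := by
  unfold seg; exact (List.length_map ..).trans List.length_range

lemma seg_take (T : Text) {m n : ℕ} (h : m ≤ n) : (seg T n).take m = seg T m := by
  unfold seg
  exact (List.map_take ..).symm.trans (congrArg (List.map T) (by rw [List.take_range, Nat.min_eq_left h]))

lemma contentSeg_seg_mono (T : Text) {a b : ℕ} (h : a ≤ b) :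
    contentSeg (seg T a) ⊆ contentSeg (seg T b) := by
  intro x hx
  simp only [contentSeg, seg, Set.mem_setOf_eq, List.mem_map, List.mem_range] at hx ⊢
  obtain ⟨i, hi, hT⟩ := List.mem_map.1 hx
  exact List.mem_map.2 ⟨i, List.mem_range.2 (lt_of_lt_of_le (List.mem_range.1 hi) h), hT⟩

lemma content_canonical (L : Set ℕ) [DecidablePred (· ∈ L)] :
    content (fun n => if n ∈ L then some n else none : Text) = L := by
  ext x; constructor
  · rintro ⟨n, hn⟩
    by_cases hm : n ∈ L
    · simp only [if_pos hm, Option.some.injEq] at hn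
      exact hn ▸ hm
    · simp only [if_neg hm] at hn
      exact absurd hn (by simp)
  · intro hx; exact ⟨x, by simp [hx]⟩

lemma primrec_optionToList {α : Type} [Primcodable α] :
    Primrec (fun o : Option α => o.toList) :=
  (Primrec.option_casesOn .id (.const []) ((Primrec.list_cons.comp .snd (.const [])).to₂)).of_eq
    fun o => by cases o <;> rfl

lemma primrec_take : Primrec₂ (fun (l : List (Option ℕ)) (n : ℕ) => l.take n) := by
  have hstep : Primrec (fun x : (List (Option ℕ) × ℕ) × (ℕ × List (Option ℕ)) =>
      x.2.2 ++ (x.1.1[x.2.1]?).toList) :=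
    Primrec.list_append.comp (Primrec.snd.comp Primrec.snd)
      (primrec_optionToList.comp (Primrec.list_getElem?.comp (Primrec.fst.comp Primrec.fst)
        (Primrec.fst.comp Primrec.snd)))
  have main : Primrec (fun p : List (Option ℕ) × ℕ => p.1.take p.2) := by
    refine (Primrec.nat_rec' (f := fun p : List (Option ℕ) × ℕ => p.2) Primrec.snd
      (.const ([] : List (Option ℕ)))
      (h := fun (p : List (Option ℕ) × ℕ) (q : ℕ × List (Option ℕ)) =>
        q.2 ++ (p.1[q.1]?).toList) hstep.to₂).of_eq ?_
    rintro ⟨l, n⟩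
    show Nat.rec [] (fun k IH => IH ++ l[k]?.toList) n = l.take n
    induction n with
    | zero => rfl
    | succ n ih =>
      rw [List.take_succ, ← ih]
  exact main.to₂

/-- step-bounded evaluation of code `c` on a prefix of `σ`. -/
def evA (c : Code) (σ : List (Option ℕ)) (m : ℕ) : Option ℕ :=
  evaln σ.length c (encode (σ.take m))

/-- the delaying function. -/
def rT (c : Code) (T : Text) (n : ℕ) : ℕ :=
  Nat.findGreatest (fun m => (evA c (seg T n) m).isSome = true) n

/-- the total learner. -/
def hTot (c : Code) (e₀ : ℕ) (σ : List (Option ℕ)) : ℕ :=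
  (evA c σ (Nat.findGreatest (fun m => (evA c σ m).isSome = true) σ.length)).getD e₀

lemma evA_seg (c : Code) (T : Text) {m n : ℕ} (h : m ≤ n) :
    evA c (seg T n) m = evaln n c (encode (seg T m)) := by
  rw [evA, seg_length, seg_take T h]

lemma hTot_seg (c : Code) (e₀ : ℕ) (T : Text) (n : ℕ) :
    hTot c e₀ (seg T n) = (evA c (seg T n) (rT c T n)).getD e₀ := by
  rw [hTot, rT, seg_length]

lemma primrec_evA (c : Code) : Primrec₂ (evA c) := by
  have : Primrec (fun p : List (Option ℕ) × ℕ =>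
      evaln p.1.length c (encode (p.1.take p.2))) :=
    primrec_evaln.comp (((Primrec.list_length.comp .fst).pair (.const c)).pair
      (Primrec.encode.comp (primrec_take.comp .fst .snd)))
  exact this.to₂

lemma computable_hTot (c : Code) (e₀ : ℕ) : Computable (hTot c e₀) := by
  have hrel : PrimrecRel (fun (σ : List (Option ℕ)) (m : ℕ) => (evA c σ m).isSome = true) := by
    have : Primrec₂ (fun (σ : List (Option ℕ)) (m : ℕ) => (evA c σ m).isSome) :=
      (Primrec.option_isSome.comp ((primrec_evA c).comp .fst .snd)).to₂
    exact Primrec₂.primrecRel (this.of_eq fun σ m => by simp : Primrec₂ fun σ m => decide ((evA c σ m).isSome = true))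
  have hfg : Primrec (fun σ : List (Option ℕ) =>
      Nat.findGreatest (fun m => (evA c σ m).isSome = true) σ.length) :=
    Primrec.nat_findGreatest Primrec.list_length hrel
  exact (Primrec.option_getD.comp ((primrec_evA c).comp .id hfg) (.const e₀)).to_comp

lemma semantic_normal_form {α : Type} [Primcodable α] (inp : Text → ℕ → α)
    (δ : Restriction) (hs : Semantic δ) : RClass inp δ = PClass inp δ := by
  refine Set.Subset.antisymm (RClass_subset_PClass inp δ) ?_
  rintro 𝓛 ⟨h, hp, hl⟩
  have hF : Partrec fun q : α × ℕ =>
      (h q.1).bind fun e => ((Denumerable.ofNat Code e).eval q.2) :=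
    (hp.comp Computable.fst).bind
      (Nat.Partrec.Code.eval_part.comp ((Computable.ofNat _).comp .snd) (Computable.snd.comp .fst))
  obtain ⟨cF, hcF⟩ := Nat.Partrec.Code.exists_code.1 hF
  set k : α → ℕ := fun a => encode (cF.curry (encode a)) with hkdef
  have hk : Computable k :=
    (Primrec.encode.comp (primrec₂_curry.comp (.const cF) .encode)).to_comp
  have hW : ∀ (a : α) (e : ℕ), h a = Part.some e → Wset (k a) = Wset e := by
    intro a e he
    have heval : ∀ x : ℕ, (Denumerable.ofNat Code (k a)).eval x =
        ((h a).bind fun e => (Denumerable.ofNat Code e).eval x).map encode := by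
      intro x
      rw [hkdef]
      rw [show Denumerable.ofNat Code (encode (cF.curry (encode a))) = cF.curry (encode a) from
        Denumerable.ofNat_encode _]
      rw [eval_curry, show Nat.pair (encode a) x = encode (a, x) by rw [Encodable.encode_prod_val, Encodable.encode_nat], hcF]
      simp [Encodable.encodek]
    ext x
    simp only [Wset, Set.mem_setOf_eq, heval x, he]
    simp [Part.bind_some]
  refine ⟨k, hk, fun L hL T hT => ?_⟩
  obtain ⟨p, hpn, hδ⟩ := hl L hL T hT
  exact ⟨fun n => k (inp T n), fun n => rfl,
    hs p _ T hδ fun n => (hW (inp T n) (p n) (hpn n)).symm⟩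

lemma delayable_normal_form (δ : Restriction) (hd : Delayable δ) :
    RClass inpG δ = PClass inpG δ := by
  classical
  refine Set.Subset.antisymm (RClass_subset_PClass inpG δ) ?_
  rintro 𝓛 ⟨h, hp, hl⟩
  by_cases hne : ∃ L, L ∈ 𝓛
  swap
  · exact ⟨fun _ => 0, Computable.const 0, fun L hL => absurd ⟨L, hL⟩ hne⟩
  obtain ⟨L₀, hL₀⟩ := hne
  obtain ⟨p₀, hp₀, -⟩ := hl L₀ hL₀ (fun n => if n ∈ L₀ then some n else none)
    (content_canonical L₀)

  set e₀ := p₀ 0 with he₀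
  have h0 : h [] = Part.some e₀ := hp₀ 0
  obtain ⟨c, hc⟩ := Nat.Partrec.Code.exists_code.1 hp
  have hceval : ∀ (σ : List (Option ℕ)) (e : ℕ), h σ = Part.some e →
      c.eval (encode σ) = Part.some e := by
    intro σ e he
    rw [hc]
    simp [Encodable.encodek, he]
  -- key: value of the total learner on segments of a text on which h is total
  have hval : ∀ (T : Text) (p : ℕ → ℕ), (∀ n, h (seg T n) = Part.some (p n)) →
      ∀ n, hTot c e₀ (seg T n) = p (rT c T n) := by
    intro T p hpn n
    rw [hTot_seg]
    by_cases hex : ∃ m, m ≤ n ∧ (evA c (seg T n) m).isSome = true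
    · obtain ⟨m, hm, hPm⟩ := hex
      have hPr : (evA c (seg T n) (rT c T n)).isSome = true :=
        Nat.findGreatest_spec (P := fun m => (evA c (seg T n) m).isSome = true) hm hPm
      have hrle : rT c T n ≤ n := Nat.findGreatest_le n
      obtain ⟨v, hv⟩ := Option.isSome_iff_exists.1 hPr
      rw [hv, Option.getD_some]
      have hvmem : v ∈ Code.eval c (encode (seg T (rT c T n))) := by
        rw [evA_seg c T hrle] at hv
        exact evaln_sound (Option.mem_def.2 hv)
      rw [hceval _ _ (hpn (rT c T n))] at hvmem
      exact Part.mem_some_iff.1 hvmem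
    · push_neg at hex
      have hr0 : rT c T n = 0 :=
        Nat.findGreatest_eq_zero_iff.2 fun k _ hkn hPk => hex k hkn hPk
      have h00 : evA c (seg T n) 0 = none := by
        cases hev : evA c (seg T n) 0 with
        | none => rfl
        | some v => exact absurd (by rw [hev]; rfl) (hex 0 n.zero_le)
      rw [hr0, h00, Option.getD_none]
      have : Part.some e₀ = Part.some (p 0) := by
        rw [← h0]; exact hpn 0
      exact Part.some_inj.1 this
  have hmono : ∀ T : Text, Monotone (rT c T) := by
    intro T
    apply monotone_nat_of_le_succ
    intro n
    rcases Nat.eq_zero_or_pos (rT c T n) with h0' | hpos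
    · rw [h0']; exact Nat.zero_le _
    · have hPr : (evA c (seg T n) (rT c T n)).isSome = true :=
        (Nat.findGreatest_eq_iff.1
          (rfl : Nat.findGreatest
            (fun m => (evA c (seg T n) m).isSome = true) n = rT c T n)).2.1
          (Nat.pos_iff_ne_zero.1 hpos)
      have hrle : rT c T n ≤ n := Nat.findGreatest_le n
      obtain ⟨v, hv⟩ := Option.isSome_iff_exists.1 hPr
      rw [evA_seg c T hrle] at hv
      have hv' : v ∈ evaln (n + 1) c (encode (seg T (rT c T n))) :=
        evaln_mono (Nat.le_succ n) (Option.mem_def.2 hv)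
      refine Nat.le_findGreatest (le_trans hrle (Nat.le_succ n)) ?_
      rw [evA_seg c T (le_trans hrle (Nat.le_succ n))]
      exact Option.isSome_iff_exists.2 ⟨v, Option.mem_def.1 hv'⟩
  have hub : ∀ (T : Text) (p : ℕ → ℕ), (∀ n, h (seg T n) = Part.some (p n)) →
      ∀ m, ∃ n, m ≤ rT c T n := by
    intro T p hpn m
    have : p m ∈ c.eval (encode (seg T m)) := by
      rw [hceval _ _ (hpn m)]; exact Part.mem_some _
    obtain ⟨s, hs⟩ := evaln_complete.1 this
    refine ⟨max m s, Nat.le_findGreatest (le_max_left m s) ?_⟩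
    rw [evA_seg c T (le_max_left m s)]
    exact Option.isSome_iff_exists.2 ⟨p m, Option.mem_def.1 (evaln_mono (le_max_right m s) hs)⟩
  refine ⟨hTot c e₀, computable_hTot c e₀, fun L hL T hT => ?_⟩
  obtain ⟨p, hpn, hδ⟩ := hl L hL T hT
  have hpn' : ∀ n, h (seg T n) = Part.some (p n) := hpn
  refine ⟨p ∘ rT c T, fun n => congrArg Part.some (hval T p hpn' n), ?_⟩
  exact hd T T rfl p (rT c T) (hmono T) (hub T p hpn')
    hδ (fun n => contentSeg_seg_mono T (Nat.findGreatest_le n))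

/-- for delayable δ, [RTxtGδ] = [TxtGδ]; and for semantic δ' and every
interaction operator β ∈ {G, Psd, Sd}, [RTxtβδ'] = [Txtβδ']. -/
theorem totality_normal_form :
    (∀ δ : Restriction, Delayable δ → RClass inpG δ = PClass inpG δ) ∧
    (∀ δ' : Restriction, Semantic δ' →
      RClass inpG δ' = PClass inpG δ' ∧
      RClass inpPsd δ' = PClass inpPsd δ' ∧
      RClass inpSd δ' = PClass inpSd δ') := by
  exact ⟨fun δ hd => delayable_normal_form δ hd,
    fun δ' hs => ⟨semantic_normal_form inpG δ' hs, semantic_normal_form inpPsd δ' hs,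
      semantic_normal_form inpSd δ' hs⟩⟩
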